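/- Let F : F_q^n → F_q^N be any encoding function for an ICSIE instance (δ_s, 𝒢). Then F is a valid (δ_s,𝒢)-ICSIE encoding (i.e., decoding functions D_1,...,D_m satisfying the ICSIE condition exist) if and only if F(X) ≠ F(X') for all X, X' ∈ F_q^n with X − X' ∈ I(q,𝒢,δ_s). -/

import Mathlib

open Finset

/-- Restriction of a vector to the coordinates in a finite index set. -/
def proj {ι 𝔽 : Type*} (A : Finset ι) (x : ι → 𝔽) : {a // a ∈ A} → 𝔽 :=
  fun a => x a.1

/-- `enc` is a valid (δ,𝒢)-ICSIE encoding: decoders exist recovering the wanted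
messages from the codeword and side information with at most `δ r` errors. -/
def ValidEnc (𝔽 : Type*) [DecidableEq 𝔽] {ι R C : Type*}
    (X f : R → Finset ι) (δ : R → ℕ) (enc : (ι → 𝔽) → C) : Prop :=
  ∃ D : (r : R) → C → ({a // a ∈ X r} → 𝔽) → ({a // a ∈ f r} → 𝔽),
    ∀ (r : R) (x : ι → 𝔽) (xt : {a // a ∈ X r} → 𝔽),
      hammingDist (proj (X r) x) xt ≤ δ r → D r (enc x) xt = proj (f r) x

/-- The set I(q,𝒢,δ_s). -/
def ISet (𝔽 : Type*) [Zero 𝔽] [DecidableEq 𝔽] {ι R : Type*}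
    (X f : R → Finset ι) (δ : R → ℕ) : Set (ι → 𝔽) :=
  {Z | ∃ r : R, hammingNorm (proj (X r) Z) ≤ 2 * δ r ∧ proj (f r) Z ≠ 0}

lemma proj_sub {ι 𝔽 : Type*} [SubtractionMonoid 𝔽] (A : Finset ι) (x y : ι → 𝔽) :
    proj A (x - y) = proj A x - proj A y := rfl

/-- an encoding `F` is a valid (δ_s,𝒢)-ICSIE encoding iff
`F X ≠ F X'` whenever `X - X' ∈ I(q,𝒢,δ_s)`. -/
theorem validEnc_iff_separates_ISet
    {𝔽 : Type*} [Field 𝔽] [Fintype 𝔽] [DecidableEq 𝔽]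
    {n m N : ℕ} (X f : Fin m → Finset (Fin n)) (δ : Fin m → ℕ)
    (hdisj : ∀ i, Disjoint (f i) (X i))
    (F : (Fin n → 𝔽) → (Fin N → 𝔽)) :
    ValidEnc 𝔽 X f δ F ↔
      ∀ x x' : Fin n → 𝔽, x - x' ∈ ISet 𝔽 X f δ → F x ≠ F x' := by
  classical
  constructor
  · rintro ⟨D, hD⟩ x x' ⟨r, hnorm, hne⟩ hFeq
    -- disagreement set
    set Dis : Finset {a // a ∈ X r} := univ.filter (fun a => x a.1 ≠ x' a.1) with hDis
    have hcard : Dis.card ≤ 2 * δ r := by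
      have : hammingNorm (proj (X r) (x - x')) =
          hammingDist (proj (X r) x) (proj (X r) x') := by
        rw [proj_sub, hammingDist_comm, hammingDist_eq_hammingNorm, neg_add_eq_sub]
      rw [this] at hnorm
      refine le_trans (le_of_eq ?_) hnorm
      rw [hDis, hammingDist]
      congr 1
    obtain ⟨T, hTsub, hTcard⟩ := Finset.exists_subset_card_eq
      (show Dis.card - δ r ≤ Dis.card from Nat.sub_le _ _)
    set xt : {a // a ∈ X r} → 𝔽 := fun a => if a ∈ T then x' a.1 else x a.1 with hxt
    have h1 : hammingDist (proj (X r) x) xt ≤ δ r := by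
      have hsub : (univ.filter fun a => proj (X r) x a ≠ xt a) ⊆ T := by
        intro a ha
        simp only [mem_filter] at ha
        by_contra hm
        simp [hxt, hm, proj] at ha
      calc _ ≤ T.card := Finset.card_le_card hsub
        _ ≤ δ r := by omega
    have h2 : hammingDist (proj (X r) x') xt ≤ δ r := by
      have hsub : (univ.filter fun a => proj (X r) x' a ≠ xt a) ⊆ Dis \ T := by
        intro a ha
        simp only [mem_filter] at ha
        by_cases hm : a ∈ T
        · simp [hxt, hm, proj] at ha
        · simp only [hxt, if_neg hm, proj] at ha
          simp [Finset.mem_sdiff, hDis, hm]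
          exact fun h => ha.2 h.symm
      calc _ ≤ (Dis \ T).card := Finset.card_le_card hsub
        _ ≤ Dis.card - T.card := by
            rw [Finset.card_sdiff_of_subset hTsub]
        _ ≤ δ r := by omega
    have e1 := hD r x xt h1
    have e2 := hD r x' xt h2
    rw [hFeq, e2] at e1
    apply hne
    rw [proj_sub, e1, sub_self]
  · intro hsep
    refine ⟨fun r c xt =>
      if h : ∃ y, F y = c ∧ hammingDist (proj (X r) y) xt ≤ δ r
      then proj (f r) h.choose else fun _ => 0, ?_⟩
    intro r x xt hle
    have hex : ∃ y, F y = F x ∧ hammingDist (proj (X r) y) xt ≤ δ r := ⟨x, rfl, hle⟩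
    simp only [dif_pos hex]
    obtain ⟨hF, hdist⟩ := hex.choose_spec
    set y := hex.choose
    by_contra hne
    have hmem : y - x ∈ ISet 𝔽 X f δ := by
      refine ⟨r, ?_, ?_⟩
      · rw [proj_sub, ← neg_add_eq_sub, ← hammingDist_eq_hammingNorm, hammingDist_comm]
        calc hammingDist (proj (X r) y) (proj (X r) x)
            ≤ hammingDist (proj (X r) y) xt + hammingDist xt (proj (X r) x) :=
              hammingDist_triangle _ _ _
          _ ≤ δ r + δ r := Nat.add_le_add hdist (by rwa [hammingDist_comm])
          _ = 2 * δ r := by ring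
      · rw [proj_sub]
        exact sub_ne_zero.mpr hne
    exact hsep y x hmem hF
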